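/- For odd s, the antisymmetrized multibracket [x_1,...,x_s] = Σ_{σ∈S_s} sgn(σ) x_{σ(1)}···x_{σ(s)} of associative operators does not satisfy the GJI with zero right-hand side; instead Σ_{σ∈S_{2s-1}} sgn(σ)[[x_{σ(1)},...,x_{σ(s)}],x_{σ(s+1)},...,x_{σ(2s-1)}] is proportional (with nonzero constant) to the (2s−1)-bracket [x_1,...,x_{2s-1}]. -/

import Mathlib

/-- The fully antisymmetrized `s`-fold product in an associative algebra. -/
noncomputable def multibracket {A : Type*} [Ring A] {s : ℕ} (x : Fin s → A) : A :=
  ∑ σ : Equiv.Perm (Fin s), (Equiv.Perm.sign σ : ℤ) • (List.ofFn fun i => x (σ i)).prod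

/-- The full antisymmetrization over `2s-1` elements of the nested `s`-bracket,
for odd `s = 2p+1` (so `2s-1 = (2p+1)+(2p)`). -/
noncomputable def nestedGJISum (p : ℕ) (A : Type*) [Ring A]
    (x : Fin ((2 * p + 1) + (2 * p)) → A) : A :=
  ∑ σ : Equiv.Perm (Fin ((2 * p + 1) + (2 * p))),
    (Equiv.Perm.sign σ : ℤ) •
      multibracket
        (Fin.cons (multibracket fun i : Fin (2 * p + 1) => x (σ (Fin.castAdd (2 * p) i)))
          (fun j : Fin (2 * p) => x (σ (Fin.natAdd (2 * p + 1) j))))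


section AllAux
open Equiv Equiv.Perm Finset List



namespace GJIAux

/-- Equivalence of `Fin t` with the initial segment of `Fin N`. -/
def segEquiv (t N : ℕ) (h : t ≤ N) : Fin t ≃ {i : Fin N // (i : ℕ) < t} where
  toFun j := ⟨⟨j.1, lt_of_lt_of_le j.2 h⟩, j.2⟩
  invFun i := ⟨i.1.1, i.2⟩
  left_inv j := rfl
  right_inv i := rfl

lemma finRotate_pow_val {t : ℕ} (j : ℕ) (a : Fin t) :
    ((((finRotate t) ^ j) a : Fin t) : ℕ) = ((a : ℕ) + j) % t := by
  induction j with
  | zero => simp [Nat.mod_eq_of_lt a.isLt]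
  | succ j ih =>
    rw [pow_succ', Perm.mul_apply]
    match t, a with
    | (t+1), a =>
      rw [finRotate_succ_apply, Fin.add_def]
      simp only [Fin.val_mk, Fin.val_one', ih, ← Nat.add_mod]
      rw [Nat.add_assoc]

/-- rotation by `m+1` of the first `k+(m+1)` entries of `Fin (m+1+m)`. -/
noncomputable def nu (m : ℕ) (k : Fin (m+1)) : Perm (Fin (m+1+m)) :=
  ((finRotate ((k : ℕ) + (m+1))) ^ (m+1)).extendDomain
    (segEquiv ((k:ℕ)+(m+1)) (m+1+m) (by omega))

lemma nu_val {m : ℕ} (k : Fin (m+1)) (i : Fin (m+1+m)) :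
    ((nu m k) i : ℕ) =
      if (i : ℕ) < (k:ℕ)+(m+1) then ((i:ℕ) + (m+1)) % ((k:ℕ)+(m+1)) else (i:ℕ) := by
  split_ifs with hi
  · have hi2 : i = ((segEquiv ((k:ℕ)+(m+1)) (m+1+m) (by omega)) ⟨(i:ℕ), hi⟩ : Fin (m+1+m)) := rfl
    conv_lhs => rw [nu, hi2, Equiv.Perm.extendDomain_apply_image]
    simp [segEquiv, finRotate_pow_val]
  · rw [nu, Equiv.Perm.extendDomain_apply_not_subtype]
    simpa using hi

lemma sign_nu {m : ℕ} (hm : Even m) (k : Fin (m+1)) :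
    Perm.sign (nu m k) = (-1) ^ (k : ℕ) := by
  rw [nu, Equiv.Perm.sign_extendDomain, map_pow]
  rw [show (k:ℕ) + (m+1) = ((k:ℕ)+m)+1 by ring, sign_finRotate, ← pow_mul]
  rcases Nat.even_or_odd (k : ℕ) with hk | hk
  · have h1 : Even (((k:ℕ)+m) * (m+1)) := ((hk.add hm).mul_right _)
    rw [Nat.add_sub_cancel, h1.neg_one_pow, hk.neg_one_pow]
  · have h1 : Odd (((k:ℕ)+m) * (m+1)) := by
      refine Odd.mul ?_ ?_
      · exact hk.add_even hm
      · exact hm.add_one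
    rw [Nat.add_sub_cancel, h1.neg_one_pow, hk.neg_one_pow]

end GJIAux

open Equiv Equiv.Perm Finset List
namespace GJIAux3

variable {A : Type*} [Ring A]

lemma cons_val_pos {m : ℕ} (b : A) (v : Fin m → A) (r : Fin (m+1)) (j : ℕ) (hj : j < m)
    (hr : (r : ℕ) = j + 1) : Fin.cons (α := fun _ => A) b v r = v ⟨j, hj⟩ := by
  have hr2 : r = Fin.succ ⟨j, hj⟩ := by
    apply Fin.ext; simpa using hr
  rw [hr2, Fin.cons_succ]

lemma cons_update {m : ℕ} (b : A) (v : Fin m → A) (τ : Perm (Fin (m+1))) :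
    (fun i => Fin.cons (α := fun _ => A) b v (τ i))
      = Function.update ((Fin.cons (α := fun _ => A) 1 v) ∘ ⇑τ) (τ⁻¹ 0) b := by
  funext i
  rcases eq_or_ne i (τ⁻¹ 0) with h | h
  · subst h
    simp [Equiv.Perm.inv_def]
  · rw [Function.update_of_ne h]
    have hτ : τ i ≠ 0 := by
      intro hc
      exact h (by rw [← hc, Equiv.Perm.inv_def, Equiv.symm_apply_apply])
    rcases Fin.eq_zero_or_eq_succ (τ i) with h0 | ⟨j, hj⟩
    · exact absurd h0 hτ
    · simp only [Function.comp_apply, hj, Fin.cons_succ]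

lemma expand_inner {m : ℕ} (u : Fin (m+1) → A) (v : Fin m → A) (τ : Perm (Fin (m+1))) :
    (List.ofFn fun i => Fin.cons (α := fun _ => A) (multibracket u) v (τ i)).prod
      = ∑ ρ : Perm (Fin (m+1)), (Perm.sign ρ : ℤ) •
          (List.ofFn fun i =>
            Fin.cons (α := fun _ => A) ((List.ofFn fun j => u (ρ j)).prod) v (τ i)).prod := by
  have key : ∀ b : A, (List.ofFn fun i => Fin.cons (α := fun _ => A) b v (τ i)).prod
      = MultilinearMap.mkPiAlgebraFin ℤ (m+1) A
          (Function.update ((Fin.cons (α := fun _ => A) 1 v) ∘ ⇑τ) (τ⁻¹ 0) b) := by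
    intro b
    rw [MultilinearMap.mkPiAlgebraFin_apply, ← cons_update]
  rw [key, multibracket, MultilinearMap.map_update_sum]
  refine Finset.sum_congr rfl fun ρ _ => ?_
  rw [MultilinearMap.map_update_smul, key]

lemma absorb {N : ℕ} (π : Perm (Fin N)) (g : Perm (Fin N) → A) :
    ∑ σ : Perm (Fin N), (Perm.sign σ : ℤ) • g (σ * π)
      = (Perm.sign π : ℤ) • ∑ σ : Perm (Fin N), (Perm.sign σ : ℤ) • g σ := by
  have hππ : (Perm.sign π : ℤ) * (Perm.sign π : ℤ) = 1 := by
    rcases Int.units_eq_one_or (Perm.sign π) with h | h <;> simp [h]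
  rw [Finset.smul_sum]
  conv_rhs => rw [← Equiv.sum_comp (Equiv.mulRight π)
    (fun σ => (Perm.sign π : ℤ) • ((Perm.sign σ : ℤ) • g σ))]
  refine Finset.sum_congr rfl fun σ _ => ?_
  simp only [Equiv.coe_mulRight, map_mul, Units.val_mul, smul_smul]
  congr 1
  rw [mul_comm ((Perm.sign σ : ℤ)) ((Perm.sign π : ℤ)), ← mul_assoc, hππ, one_mul]
end GJIAux3


namespace GJIAux2

/-- block-diagonal permutation of `Fin (m1+m2)`. -/
def sumPerm {m1 m2 : ℕ} (a : Perm (Fin m1)) (b : Perm (Fin m2)) : Perm (Fin (m1+m2)) :=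
  (Equiv.permCongr finSumFinEquiv) (Equiv.sumCongr a b)

lemma sumPerm_castAdd {m1 m2 : ℕ} (a : Perm (Fin m1)) (b : Perm (Fin m2)) (j : Fin m1) :
    sumPerm a b (Fin.castAdd m2 j) = Fin.castAdd m2 (a j) := by
  simp [sumPerm, Equiv.permCongr_apply, finSumFinEquiv_symm_apply_castAdd]

lemma sumPerm_natAdd {m1 m2 : ℕ} (a : Perm (Fin m1)) (b : Perm (Fin m2)) (j : Fin m2) :
    sumPerm a b (Fin.natAdd m1 j) = Fin.natAdd m1 (b j) := by
  simp [sumPerm, Equiv.permCongr_apply, finSumFinEquiv_symm_apply_natAdd]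

lemma sign_sumPerm {m1 m2 : ℕ} (a : Perm (Fin m1)) (b : Perm (Fin m2)) :
    Perm.sign (sumPerm a b) = Perm.sign a * Perm.sign b := by
  rw [sumPerm, Equiv.Perm.sign_permCongr, Equiv.Perm.sign_sumCongr]

lemma decomposeFin_fst {m : ℕ} (π : Perm (Fin (m+1))) :
    (Equiv.Perm.decomposeFin π).1 = π 0 := by
  conv_rhs => rw [← Equiv.symm_apply_apply Equiv.Perm.decomposeFin π,
    show Equiv.Perm.decomposeFin π
      = ((Equiv.Perm.decomposeFin π).1, (Equiv.Perm.decomposeFin π).2) from rfl,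
    Equiv.Perm.decomposeFin_symm_apply_zero]

/-- cycle-based decomposition of a permutation of `Fin (m+1)`. -/
def phi (m : ℕ) : Fin (m+1) × Perm (Fin m) ≃ Perm (Fin (m+1)) where
  toFun ke := (Fin.cycleRange ke.1)⁻¹ * Equiv.Perm.decomposeFin.symm (0, ke.2)
  invFun δ := (δ 0, (Equiv.Perm.decomposeFin (Fin.cycleRange (δ 0) * δ)).2)
  left_inv := by
    rintro ⟨k, e⟩
    simp only
    have h0 : ((Fin.cycleRange k)⁻¹ * Equiv.Perm.decomposeFin.symm (0, e)) 0 = k := by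
      rw [Perm.mul_apply, Equiv.Perm.decomposeFin_symm_apply_zero]
      exact Equiv.Perm.inv_eq_iff_eq.2 (Fin.cycleRange_self k).symm
    rw [h0]
    rw [show Fin.cycleRange k * ((Fin.cycleRange k)⁻¹ * Equiv.Perm.decomposeFin.symm (0, e))
      = Equiv.Perm.decomposeFin.symm (0, e) by group]
    rw [Equiv.apply_symm_apply]
  right_inv := by
    intro δ
    simp only
    have h1 : (Equiv.Perm.decomposeFin (Fin.cycleRange (δ 0) * δ)).1 = 0 := by
      rw [decomposeFin_fst, Perm.mul_apply, Fin.cycleRange_self]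
    calc (Fin.cycleRange (δ 0))⁻¹
          * Equiv.Perm.decomposeFin.symm (0, (Equiv.Perm.decomposeFin (Fin.cycleRange (δ 0) * δ)).2)
        = (Fin.cycleRange (δ 0))⁻¹
          * Equiv.Perm.decomposeFin.symm (Equiv.Perm.decomposeFin (Fin.cycleRange (δ 0) * δ)) := by
          rw [show Equiv.Perm.decomposeFin (Fin.cycleRange (δ 0) * δ)
            = ((Equiv.Perm.decomposeFin (Fin.cycleRange (δ 0) * δ)).1,
               (Equiv.Perm.decomposeFin (Fin.cycleRange (δ 0) * δ)).2) from rfl, h1]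
      _ = δ := by rw [Equiv.symm_apply_apply]; group

lemma sign_phi {m : ℕ} (k : Fin (m+1)) (e : Perm (Fin m)) :
    Perm.sign (phi m (k, e)) = (-1) ^ (k : ℕ) * Perm.sign e := by
  show Perm.sign ((Fin.cycleRange k)⁻¹ * Equiv.Perm.decomposeFin.symm (0, e)) = _
  rw [map_mul, map_inv, Fin.sign_cycleRange, Equiv.Perm.decomposeFin.symm_sign, if_pos rfl]
  simp [inv_pow]

lemma phi_word {m : ℕ} {A : Type*} [Ring A] (b : A) (v : Fin m → A) (k : Fin (m+1))
    (e : Perm (Fin m)) (q : Fin (m+1)) :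
    Fin.cons (α := fun _ => A) b v (((phi m (k, e))⁻¹) q) = Fin.cons (α := fun _ => A) b (v ∘ ⇑e⁻¹) (Fin.cycleRange k q) := by
  have key : ∀ r : Fin (m+1),
      Fin.cons (α := fun _ => A) b v ((Equiv.Perm.decomposeFin.symm (0, e))⁻¹ r) = Fin.cons (α := fun _ => A) b (v ∘ ⇑e⁻¹) r := by
    intro r
    induction r using Fin.cases with
    | zero =>
      have h : (Equiv.Perm.decomposeFin.symm (0, e))⁻¹ 0 = 0 :=
        Equiv.Perm.inv_eq_iff_eq.2 (Equiv.Perm.decomposeFin_symm_apply_zero 0 e).symm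
      rw [h, Fin.cons_zero, Fin.cons_zero]
    | succ j =>
      have h : (Equiv.Perm.decomposeFin.symm (0, e))⁻¹ j.succ = (e⁻¹ j).succ := by
        refine Equiv.Perm.inv_eq_iff_eq.2 ?_
        rw [Equiv.Perm.decomposeFin_symm_apply_succ,
          show e (e⁻¹ j) = j from (Equiv.Perm.inv_eq_iff_eq.mp rfl).symm, Equiv.swap_self]
        rfl
      rw [h, Fin.cons_succ, Fin.cons_succ]
      rfl
  have h2 : ((phi m (k, e))⁻¹) q
      = (Equiv.Perm.decomposeFin.symm (0, e))⁻¹ (Fin.cycleRange k q) := by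
    show ((Fin.cycleRange k)⁻¹ * Equiv.Perm.decomposeFin.symm (0, e))⁻¹ q = _
    rw [mul_inv_rev, Perm.mul_apply, inv_inv]
  rw [h2, key]

end GJIAux2
set_option maxHeartbeats 1000000 in
section
open Equiv Equiv.Perm Finset List GJIAux GJIAux3

variable {A : Type*} [Ring A]

lemma flatten {m : ℕ} (y : Fin (m+1+m) → A) (k : Fin (m+1)) :
    (List.ofFn fun q : Fin (m+1) =>
        Fin.cons (α := fun _ => A) ((List.ofFn fun j : Fin (m+1) => y (Fin.castAdd m j)).prod)
          (fun j : Fin m => y (Fin.natAdd (m+1) j)) (Fin.cycleRange k q)).prod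
      = (List.ofFn fun i => y (nu m k i)).prod := by
  set B : A := (List.ofFn fun j : Fin (m+1) => y (Fin.castAdd m j)).prod with hB
  set v : Fin m → A := fun j => y (Fin.natAdd (m+1) j) with hv
  set g : Fin (m+1) → A := fun q => Fin.cons (α := fun _ => A) B v (Fin.cycleRange k q) with hg
  set L : List A := List.ofFn g with hL
  set R : List A := List.ofFn (fun i => y (nu m k i)) with hR
  have hkm : (k:ℕ) ≤ m := Nat.lt_succ_iff.mp k.isLt
  have hLlen : L.length = m+1 := by rw [hL, List.length_ofFn]
  have hRlen : R.length = m+1+m := by rw [hR, List.length_ofFn]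
  have hkL : (k:ℕ) < L.length := by omega
  -- the entry of L at position k is B
  have hgetk : L[(k:ℕ)]'hkL = B := by
    simp only [hL, List.getElem_ofFn, hg]
    rw [show (⟨(k:ℕ), by omega⟩ : Fin (m+1)) = k from Fin.ext rfl, Fin.cycleRange_self,
      Fin.cons_zero]
  -- first segment
  have e1 : L.take (k:ℕ) = R.take (k:ℕ) := by
    apply List.ext_getElem
    · simp only [List.length_take]; omega
    · intro i h1 h2
      have hik : i < (k:ℕ) := by simp only [List.length_take] at h1; omega
      simp only [List.getElem_take, hL, hR, List.getElem_ofFn, hg]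
      have hcy : ((Fin.cycleRange k) (⟨i, by omega⟩ : Fin (m+1)) : ℕ) = i + 1 :=
        Fin.coe_cycleRange_of_lt (by rw [Fin.lt_def]; exact hik)
      rw [cons_val_pos B v _ i (by omega) hcy, hv]
      apply congrArg y
      apply Fin.ext
      rw [Fin.coe_natAdd, nu_val, if_pos (by simp only [Fin.val_mk]; omega)]
      simp only [Fin.val_mk]
      rw [Nat.mod_eq_of_lt (by omega)]
      omega
  -- middle segment
  have e2 : (R.drop (k:ℕ)).take (m+1) = List.ofFn (fun j : Fin (m+1) => y (Fin.castAdd m j)) := by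
    apply List.ext_getElem
    · simp only [List.length_take, List.length_drop, List.length_ofFn]; omega
    · intro i h1 h2
      have him : i < m+1 := by simp only [List.length_ofFn] at h2; omega
      simp only [List.getElem_take, List.getElem_drop, hR, List.getElem_ofFn]
      apply congrArg y
      apply Fin.ext
      rw [nu_val]
      simp only [Fin.val_mk, Fin.coe_castAdd]
      rw [if_pos (by omega)]
      rw [show (k:ℕ) + i + (m+1) = ((k:ℕ)+(m+1)) + i by ring, Nat.add_mod_left,
        Nat.mod_eq_of_lt (by omega)]
  -- last segment
  have e3 : L.drop ((k:ℕ)+1) = R.drop ((k:ℕ)+(m+1)) := by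
    apply List.ext_getElem
    · simp only [List.length_drop]; omega
    · intro i h1 h2
      have him : (k:ℕ) + 1 + i < m + 1 := by simp only [List.length_drop] at h1; omega
      simp only [List.getElem_drop, hL, hR, List.getElem_ofFn, hg]
      have hgt : Fin.cycleRange k (⟨(k:ℕ)+1+i, by omega⟩ : Fin (m+1))
          = (⟨(k:ℕ)+1+i, by omega⟩ : Fin (m+1)) :=
        Fin.cycleRange_of_gt (by rw [Fin.lt_def]; simp only [Fin.val_mk]; omega)
      rw [hgt, cons_val_pos B v _ ((k:ℕ)+i) (by omega)
        (by simp only [Fin.val_mk]; omega), hv]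
      apply congrArg y
      apply Fin.ext
      rw [Fin.coe_natAdd, nu_val, if_neg (by simp only [Fin.val_mk]; omega)]
      simp only [Fin.val_mk]
      omega
  -- assemble
  calc L.prod = (L.take (k:ℕ)).prod * (L.drop (k:ℕ)).prod :=
        (List.prod_take_mul_prod_drop L _).symm
    _ = (L.take (k:ℕ)).prod * (B * (L.drop ((k:ℕ)+1)).prod) := by
        rw [List.drop_eq_getElem_cons hkL, List.prod_cons, hgetk]
    _ = (R.take (k:ℕ)).prod *
          (((R.drop (k:ℕ)).take (m+1)).prod * (R.drop ((k:ℕ)+(m+1))).prod) := by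
        rw [e1, e3, show B = ((R.drop (k:ℕ)).take (m+1)).prod by rw [e2]]
    _ = (R.take (k:ℕ)).prod * (R.drop (k:ℕ)).prod := by
        rw [← List.prod_take_mul_prod_drop (R.drop (k:ℕ)) (m+1), List.drop_drop]
    _ = R.prod := List.prod_take_mul_prod_drop R _

end
section KeyLemma
open Equiv Equiv.Perm Finset List GJIAux GJIAux2 GJIAux3

set_option maxHeartbeats 1600000 in
lemma key {m : ℕ} (hm : Even m) {A : Type*} [Ring A] (x : Fin (m+1+m) → A) :
    (∑ σ : Perm (Fin (m+1+m)), (Perm.sign σ : ℤ) •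
       multibracket (Fin.cons (multibracket fun i : Fin (m+1) => x (σ (Fin.castAdd m i)))
         (fun j : Fin m => x (σ (Fin.natAdd (m+1) j)))))
    = (((m+1).factorial * (m.factorial * (m+1)) : ℕ) : ℤ) • multibracket x := by
  classical
  set W0 : Perm (Fin (m+1+m)) → Perm (Fin (m+1)) → A := fun σ τ =>
    (List.ofFn fun i => Fin.cons (α := fun _ => A)
      ((List.ofFn fun j : Fin (m+1) => x (σ (Fin.castAdd m j))).prod)
      (fun j : Fin m => x (σ (Fin.natAdd (m+1) j))) (τ i)).prod with hW0
  set W2 : Perm (Fin (m+1+m)) → Fin (m+1) → A := fun σ k =>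
    (List.ofFn fun q : Fin (m+1) => Fin.cons (α := fun _ => A)
      ((List.ofFn fun j : Fin (m+1) => x (σ (Fin.castAdd m j))).prod)
      (fun j : Fin m => x (σ (Fin.natAdd (m+1) j))) (Fin.cycleRange k q)).prod with hW2
  set T : Perm (Fin (m+1)) → A :=
    fun τ => ∑ σ : Perm (Fin (m+1+m)), (Perm.sign σ : ℤ) • W0 σ τ with hT
  set G : Fin (m+1) → A :=
    fun k => ∑ σ : Perm (Fin (m+1+m)), (Perm.sign σ : ℤ) • W2 σ k with hG
  -- sign square fact
  have hsq : ∀ (N : ℕ) (π : Perm (Fin N)),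
      (Perm.sign π : ℤ) * (Perm.sign π : ℤ) = 1 := by
    intro N π
    rcases Int.units_eq_one_or (Perm.sign π) with h | h <;> simp [h]
  -- Step 1 : expand the two inner multibrackets
  have hcons : ∀ (b : A) (v : Fin m → A), multibracket (Fin.cons b v)
      = ∑ τ : Perm (Fin (m+1)), (Perm.sign τ : ℤ) •
          (List.ofFn fun i => Fin.cons (α := fun _ => A) b v (τ i)).prod := fun b v => rfl
  have hWB : ∀ (σ : Perm (Fin (m+1+m))) (ρ τ : Perm (Fin (m+1))),
      (List.ofFn fun i => Fin.cons (α := fun _ => A)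
        ((List.ofFn fun j : Fin (m+1) => x (σ (Fin.castAdd m (ρ j)))).prod)
        (fun j : Fin m => x (σ (Fin.natAdd (m+1) j))) (τ i)).prod
      = W0 (σ * sumPerm ρ (1 : Perm (Fin m))) τ := by
    intro σ ρ τ
    have hca : (fun j : Fin (m+1) => x ((σ * sumPerm ρ (1 : Perm (Fin m))) (Fin.castAdd m j)))
        = fun j => x (σ (Fin.castAdd m (ρ j))) := by
      funext j; rw [Perm.mul_apply, sumPerm_castAdd]
    have hna : (fun j : Fin m => x ((σ * sumPerm ρ (1 : Perm (Fin m))) (Fin.natAdd (m+1) j)))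
        = fun j => x (σ (Fin.natAdd (m+1) j)) := by
      funext j; rw [Perm.mul_apply, sumPerm_natAdd, Perm.one_apply]
    simp only [hW0]
    rw [hca, hna]
  have s1 : (∑ σ : Perm (Fin (m+1+m)), (Perm.sign σ : ℤ) •
       multibracket (Fin.cons (multibracket fun i : Fin (m+1) => x (σ (Fin.castAdd m i)))
         (fun j : Fin m => x (σ (Fin.natAdd (m+1) j)))))
      = ∑ σ : Perm (Fin (m+1+m)), (Perm.sign σ : ℤ) •
          ∑ τ : Perm (Fin (m+1)), (Perm.sign τ : ℤ) •
            ∑ ρ : Perm (Fin (m+1)), (Perm.sign ρ : ℤ) • W0 (σ * sumPerm ρ (1 : Perm (Fin m))) τ := by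
    refine Finset.sum_congr rfl fun σ _ => ?_
    congr 1
    rw [hcons]
    refine Finset.sum_congr rfl fun τ _ => ?_
    congr 1
    rw [expand_inner]
    refine Finset.sum_congr rfl fun ρ _ => ?_
    congr 1
    exact hWB σ ρ τ
  -- Step 2 : put the sum over σ innermost
  have s2 : (∑ σ : Perm (Fin (m+1+m)), (Perm.sign σ : ℤ) •
          ∑ τ : Perm (Fin (m+1)), (Perm.sign τ : ℤ) •
            ∑ ρ : Perm (Fin (m+1)), (Perm.sign ρ : ℤ) • W0 (σ * sumPerm ρ (1 : Perm (Fin m))) τ)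
      = ∑ τ : Perm (Fin (m+1)), ∑ ρ : Perm (Fin (m+1)),
          ((Perm.sign τ : ℤ) * (Perm.sign ρ : ℤ)) •
            ∑ σ : Perm (Fin (m+1+m)), (Perm.sign σ : ℤ) • W0 (σ * sumPerm ρ (1 : Perm (Fin m))) τ := by
    simp only [Finset.smul_sum]
    rw [Finset.sum_comm]
    refine Finset.sum_congr rfl fun τ _ => ?_
    rw [Finset.sum_comm]
    refine Finset.sum_congr rfl fun ρ _ => ?_
    refine Finset.sum_congr rfl fun σ _ => ?_
    simp only [smul_smul]
    congr 1
    ring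
  -- Step 3 : absorb ρ into σ
  have s3 : (∑ τ : Perm (Fin (m+1)), ∑ ρ : Perm (Fin (m+1)),
          ((Perm.sign τ : ℤ) * (Perm.sign ρ : ℤ)) •
            ∑ σ : Perm (Fin (m+1+m)), (Perm.sign σ : ℤ) • W0 (σ * sumPerm ρ (1 : Perm (Fin m))) τ)
      = ∑ τ : Perm (Fin (m+1)), ((m+1).factorial •
          ((Perm.sign τ : ℤ) • T τ)) := by
    refine Finset.sum_congr rfl fun τ _ => ?_
    have hinner : ∀ ρ : Perm (Fin (m+1)),
        ((Perm.sign τ : ℤ) * (Perm.sign ρ : ℤ)) •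
            (∑ σ : Perm (Fin (m+1+m)), (Perm.sign σ : ℤ) • W0 (σ * sumPerm ρ (1 : Perm (Fin m))) τ)
        = (Perm.sign τ : ℤ) • T τ := by
      intro ρ
      rw [absorb (sumPerm ρ (1 : Perm (Fin m))) (fun π => W0 π τ)]
      have hs : (Perm.sign (sumPerm ρ (1 : Perm (Fin m))) : ℤ) = (Perm.sign ρ : ℤ) := by
        rw [sign_sumPerm]; simp
      rw [hs, smul_smul, mul_assoc, hsq _ ρ, mul_one]
    rw [Finset.sum_congr rfl fun ρ _ => hinner ρ, Finset.sum_const, Finset.card_univ,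
      Fintype.card_perm, Fintype.card_fin]
  -- Step 4 : reindex τ over the cycle decomposition
  have s4 : (∑ τ : Perm (Fin (m+1)), (Perm.sign τ : ℤ) • T τ)
      = ∑ ke : Fin (m+1) × Perm (Fin m),
          (Perm.sign (phi m ke) : ℤ) • T ((phi m ke)⁻¹) := by
    have h1 : (∑ τ : Perm (Fin (m+1)), (Perm.sign τ : ℤ) • T τ)
        = ∑ δ : Perm (Fin (m+1)), (Perm.sign δ : ℤ) • T (δ⁻¹) := by
      rw [← Equiv.sum_comp (Equiv.inv (Perm (Fin (m+1))))
        (fun τ => (Perm.sign τ : ℤ) • T τ)]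
      refine Finset.sum_congr rfl fun δ _ => ?_
      simp [Equiv.inv_apply]
    rw [h1, ← Equiv.sum_comp (phi m) (fun δ => (Perm.sign δ : ℤ) • T (δ⁻¹))]
  -- Step 5/6 : evaluate each (k,e) term
  have s5 : ∀ (k : Fin (m+1)) (e : Perm (Fin m)),
      (Perm.sign (phi m (k, e)) : ℤ) • T ((phi m (k, e))⁻¹)
        = ((-1 : ℤ) ^ (k : ℕ)) • G k := by
    intro k e
    have hword : ∀ σ : Perm (Fin (m+1+m)),
        W0 σ ((phi m (k, e))⁻¹) = W2 (σ * sumPerm (1 : Perm (Fin (m+1))) e⁻¹) k := by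
      intro σ
      have hca : (fun j : Fin (m+1) =>
            x ((σ * sumPerm (1 : Perm (Fin (m+1))) e⁻¹) (Fin.castAdd m j)))
          = fun j => x (σ (Fin.castAdd m j)) := by
        funext j; rw [Perm.mul_apply, sumPerm_castAdd, Perm.one_apply]
      have hna : (fun j : Fin m =>
            x ((σ * sumPerm (1 : Perm (Fin (m+1))) e⁻¹) (Fin.natAdd (m+1) j)))
          = fun j => x (σ (Fin.natAdd (m+1) (e⁻¹ j))) := by
        funext j; rw [Perm.mul_apply, sumPerm_natAdd]
      simp only [hW0, hW2]
      rw [hca, hna]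
      refine congrArg List.prod (congrArg List.ofFn (funext fun q => ?_))
      exact phi_word _ _ k e q
    have habs : T ((phi m (k, e))⁻¹) = (Perm.sign e : ℤ) • G k := by
      simp only [hT]
      rw [Finset.sum_congr rfl fun σ _ => by rw [hword σ]]
      rw [absorb (sumPerm (1 : Perm (Fin (m+1))) e⁻¹) (fun π => W2 π k)]
      have hs : (Perm.sign (sumPerm (1 : Perm (Fin (m+1))) e⁻¹) : ℤ)
          = (Perm.sign e : ℤ) := by
        rw [sign_sumPerm]; simp
      rw [hs]
    rw [habs, smul_smul]
    have hsp : (Perm.sign (phi m (k, e)) : ℤ) = (-1 : ℤ) ^ (k : ℕ) * (Perm.sign e : ℤ) := by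
      rw [sign_phi]; push_cast; ring
    rw [hsp, mul_assoc, hsq _ e, mul_one]
  -- Step 7 : sum over e is constant
  have s7 : (∑ ke : Fin (m+1) × Perm (Fin m),
        (Perm.sign (phi m ke) : ℤ) • T ((phi m ke)⁻¹))
      = m.factorial • ∑ k : Fin (m+1), ((-1 : ℤ) ^ (k : ℕ)) • G k := by
    rw [Fintype.sum_prod_type]
    rw [Finset.smul_sum]
    refine Finset.sum_congr rfl fun k _ => ?_
    rw [Finset.sum_congr rfl fun e _ => s5 k e, Finset.sum_const, Finset.card_univ,
      Fintype.card_perm, Fintype.card_fin]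
  -- Step 8 : evaluate G k
  have s8 : ∀ k : Fin (m+1), G k = ((-1 : ℤ) ^ (k : ℕ)) • multibracket x := by
    intro k
    have hflat : ∀ σ : Perm (Fin (m+1+m)),
        W2 σ k = (List.ofFn fun i => x ((σ * nu m k) i)).prod := by
      intro σ
      simp only [hW2]
      rw [flatten (fun i => x (σ i)) k]
      refine congrArg List.prod (congrArg List.ofFn (funext fun i => ?_))
      rw [Perm.mul_apply]
    simp only [hG]
    rw [Finset.sum_congr rfl fun σ _ => by rw [hflat σ]]
    rw [absorb (nu m k) (fun π => (List.ofFn fun i => x (π i)).prod), sign_nu hm k]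
    have : ((((-1 : ℤˣ) ^ (k : ℕ)) : ℤˣ) : ℤ) = (-1 : ℤ) ^ (k : ℕ) := by push_cast; ring
    rw [this]
    rfl
  -- Step 9 : final summation over k
  have s9 : (∑ k : Fin (m+1), ((-1 : ℤ) ^ (k : ℕ)) • G k) = (m+1) • multibracket x := by
    rw [Finset.sum_congr rfl fun k _ => by
      rw [s8 k, smul_smul, ← pow_add, Even.neg_one_pow ⟨(k : ℕ), rfl⟩, one_smul]]
    rw [Finset.sum_const, Finset.card_univ, Fintype.card_fin]
  rw [s1, s2, s3, ← Finset.smul_sum, s4, s7, s9]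
  rw [smul_smul, smul_smul, ← Nat.cast_smul_eq_nsmul ℤ]
  push_cast
  ring_nf
end KeyLemma
section Witness
open Equiv Equiv.Perm Finset List

/-- free associative algebra on `Fin n` over `ℤ`, realized as a monoid algebra. -/
abbrev FA (n : ℕ) : Type := MonoidAlgebra ℤ (FreeMonoid (Fin n))

noncomputable def gen (n : ℕ) (i : Fin n) : FA n :=
  MonoidAlgebra.single (FreeMonoid.of i) 1

/-- evaluation of a coefficient, as an additive monoid hom. -/
noncomputable def evalW (n : ℕ) (w : FreeMonoid (Fin n)) : FA n →+ ℤ :=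
  (Finsupp.applyAddHom (M := ℤ) w).comp MonoidAlgebra.coeffAddEquiv.toAddMonoidHom

lemma prod_map_gen (n : ℕ) (l : List (Fin n)) :
    (l.map (gen n)).prod = MonoidAlgebra.single (FreeMonoid.ofList l) 1 := by
  induction l with
  | nil => simp [MonoidAlgebra.one_def]
  | cons a l ih =>
    rw [List.map_cons, List.prod_cons, ih, gen, MonoidAlgebra.single_mul_single, one_mul]
    rfl

lemma multibracket_gen (n : ℕ) :
    multibracket (gen n) = ∑ σ : Perm (Fin n),
      (Perm.sign σ : ℤ) • MonoidAlgebra.single (FreeMonoid.ofList (List.ofFn ⇑σ)) (1 : ℤ) := by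
  rw [multibracket]
  refine Finset.sum_congr rfl fun σ _ => ?_
  congr 1
  rw [show (List.ofFn fun i => gen n (σ i)) = (List.ofFn ⇑σ).map (gen n) by
    rw [List.map_ofFn]; rfl]
  rw [prod_map_gen]

lemma eval_multibracket_gen (n : ℕ) :
    evalW n (FreeMonoid.ofList (List.ofFn (fun i : Fin n => i)))
      (multibracket (gen n)) = 1 := by
  rw [multibracket_gen, map_sum]
  rw [Finset.sum_congr rfl fun σ _ =>
    AddMonoidHom.map_zsmul (evalW n
      (FreeMonoid.ofList (List.ofFn (fun i : Fin n => i)))) _ _]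
  rw [Finset.sum_eq_single (1 : Perm (Fin n))]
  · rw [show (List.ofFn ⇑(1 : Perm (Fin n))) = List.ofFn (fun i : Fin n => i) by rfl]
    simp [evalW, Finsupp.applyAddHom, Finsupp.single_apply, MonoidAlgebra.coeff_single]
  · intro σ _ hσ
    have hne : FreeMonoid.ofList (List.ofFn ⇑σ)
        ≠ FreeMonoid.ofList (List.ofFn (fun i : Fin n => i)) := by
      intro hc
      apply hσ
      have h2 : List.ofFn ⇑σ = List.ofFn (fun i : Fin n => i) :=
        FreeMonoid.ofList.injective hc
      have h3 := List.ofFn_injective h2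
      exact Equiv.ext fun i => congrFun h3 i
    simp [evalW, Finsupp.applyAddHom, Finsupp.single_apply, MonoidAlgebra.coeff_single, hne]
  · intro h
    exact absurd (Finset.mem_univ _) h

end Witness

theorem odd_multibracket_GJI_proportional' (p : ℕ) :
    (¬ ∀ (A : Type) [Ring A] (x : Fin ((2 * p + 1) + (2 * p)) → A), nestedGJISum p A x = 0) ∧
    ∃ c : ℤ, c ≠ 0 ∧
      ∀ (A : Type) [Ring A] (x : Fin ((2 * p + 1) + (2 * p)) → A),
        nestedGJISum p A x = c • multibracket x := by
  have hm : Even (2*p) := ⟨p, by ring⟩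
  set c : ℤ := (((2*p+1).factorial * ((2*p).factorial * (2*p+1)) : ℕ) : ℤ) with hc
  have hcne : c ≠ 0 := by
    rw [hc]
    exact Nat.cast_ne_zero.mpr (by positivity)
  have hkey : ∀ (A : Type) [Ring A] (x : Fin ((2 * p + 1) + (2 * p)) → A),
      nestedGJISum p A x = c • multibracket x := by
    intro A _ x
    rw [nestedGJISum, hc]
    exact key hm x
  refine ⟨?_, c, hcne, hkey⟩
  intro h
  have h0 := h (FA ((2 * p + 1) + (2 * p))) (gen _)
  rw [hkey] at h0
  have h1 := congrArg (evalW ((2 * p + 1) + (2 * p))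
    (FreeMonoid.ofList (List.ofFn (fun i : Fin ((2 * p + 1) + (2 * p)) => i)))) h0
  rw [map_zero, AddMonoidHom.map_zsmul, eval_multibracket_gen, smul_eq_mul, mul_one] at h1
  exact hcne h1

/-- for odd `s = 2p+1` the antisymmetrized multibracket does not satisfy the GJI
with zero right-hand side; instead the antisymmetrized nested sum is proportional, with a
nonzero integer constant (depending only on `s`), to the single `(2s-1)`-fold bracket. -/
theorem odd_multibracket_GJI_proportional (p : ℕ) :
    (¬ ∀ (A : Type) [Ring A] (x : Fin ((2 * p + 1) + (2 * p)) → A), nestedGJISum p A x = 0) ∧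
    ∃ c : ℤ, c ≠ 0 ∧
      ∀ (A : Type) [Ring A] (x : Fin ((2 * p + 1) + (2 * p)) → A),
        nestedGJISum p A x = c • multibracket x :=
  odd_multibracket_GJI_proportional' p
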